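/- Let G be a vertex-minimal subcubic graph admitting no packing (1,1,2,2)-coloring (every proper induced subgraph admits one). Then G has no two adjacent vertices of degree 2. -/

import Mathlib

open SimpleGraph

def IsPackingColoring {V : Type*} (G : SimpleGraph V) {k : ℕ} (s : Fin k → ℕ)
    (f : V → Fin k) : Prop :=
  ∀ (i : Fin k) (x y : V), f x = i → f y = i → x ≠ y → (s i : ℕ∞) + 1 ≤ G.edist x y

lemma two_le_edist' {V : Type*} (G : SimpleGraph V) {x y : V} (hne : x ≠ y)
    (hadj : ¬ G.Adj x y) : 2 ≤ G.edist x y := by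
  have h1 : 1 ≤ G.edist x y := Order.one_le_iff_pos.mpr (G.edist_pos_of_ne hne)
  rcases h1.lt_or_eq with h | h
  · exact Order.add_one_le_of_lt h
  · exact absurd (edist_eq_one_iff_adj.mp h.symm) hadj

lemma three_le_edist' {V : Type*} (G : SimpleGraph V) {x y : V} (hne : x ≠ y)
    (hadj : ¬ G.Adj x y) (hcn : ∀ z, ¬ (G.Adj x z ∧ G.Adj z y)) :
    3 ≤ G.edist x y := by
  have h2 : 2 ≤ G.edist x y := two_le_edist' G hne hadj
  rcases h2.lt_or_eq with h | h
  · exact Order.add_one_le_of_lt h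
  · exfalso
    obtain ⟨p, hp⟩ := G.exists_walk_of_edist_eq_coe (k := 2) h.symm
    have h0 : G.Adj (p.getVert 0) (p.getVert 1) := p.adj_getVert_succ (by omega)
    have h1 : G.Adj (p.getVert 1) (p.getVert 2) := p.adj_getVert_succ (by omega)
    rw [p.getVert_zero] at h0
    have : p.getVert 2 = y := by rw [← hp]; exact p.getVert_length
    rw [this] at h1
    exact hcn _ ⟨h0, h1⟩

/-- Master extension lemma. -/
lemma master {V : Type*} [DecidableEq V] (G : SimpleGraph V) {u v w : V}
    (huv : u ≠ v) (huw : u ≠ w) (hvw : v ≠ w)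
    (hN : ∀ z, G.Adj u z ↔ (z = v ∨ z = w))
    (f' : V → Fin 4)
    (A1 : ∀ x y, x ≠ u → y ≠ u → x ≠ y → f' x = f' y → ¬ G.Adj x y)
    (A2 : ∀ x y, x ≠ u → y ≠ u → x ≠ y → f' x = f' y → (f' x = 2 ∨ f' x = 3) →
          ∀ z, z ≠ u → ¬ (G.Adj x z ∧ G.Adj z y))
    (cu cv cw : Fin 4)
    (h1v : cu ≠ cv) (h1w : cu ≠ cw)
    (h2 : cu = 2 ∨ cu = 3 → ∀ x, x ≠ u → x ≠ v → x ≠ w → f' x = cu →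
          ¬ G.Adj v x ∧ ¬ G.Adj w x)
    (h3 : cv = cw → ¬ G.Adj v w ∧ ¬ (cv = 2 ∨ cv = 3))
    (h4 : ∀ x, x ≠ u → x ≠ v → x ≠ w → f' x = cv →
          ¬ G.Adj v x ∧ ((cv = 2 ∨ cv = 3) → ∀ z, z ≠ u → ¬ (G.Adj v z ∧ G.Adj z x)))
    (h5 : ∀ x, x ≠ u → x ≠ v → x ≠ w → f' x = cw →
          ¬ G.Adj w x ∧ ((cw = 2 ∨ cw = 3) → ∀ z, z ≠ u → ¬ (G.Adj w z ∧ G.Adj z x))) :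
    ∃ g : V → Fin 4, IsPackingColoring G ![1, 1, 2, 2] g := by
  classical
  set g : V → Fin 4 := fun x => if x = u then cu else if x = v then cv else if x = w then cw else f' x with hg
  have hgu : g u = cu := by simp [hg]
  have hgv : g v = cv := by simp [hg, huv.symm, hvw]
  have hgw : g w = cw := by simp [hg, huw.symm, hvw.symm]
  have hgo : ∀ x, x ≠ u → x ≠ v → x ≠ w → g x = f' x := by
    intro x h1 h2 h3; simp [hg, h1, h2, h3]
  -- u is not adjacent to anything outside {v, w}
  have hNu : ∀ x, x ≠ v → x ≠ w → ¬ G.Adj u x := by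
    intro x hxv hxw hadj
    rcases (hN x).mp hadj with rfl | rfl <;> simp_all
  have good1 : ∀ x y, x ≠ y → g x = g y → ¬ G.Adj x y := by
    intro x y hne heq hadj
    by_cases hxu : x = u
    · subst hxu
      by_cases hyv : y = v
      · subst hyv; rw [hgu, hgv] at heq; exact h1v heq
      by_cases hyw : y = w
      · subst hyw; rw [hgu, hgw] at heq; exact h1w heq
      · exact hNu y hyv hyw hadj
    by_cases hyu : y = u
    · subst hyu
      by_cases hxv : x = v
      · subst hxv; rw [hgv, hgu] at heq; exact h1v heq.symm
      by_cases hxw : x = w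
      · subst hxw; rw [hgw, hgu] at heq; exact h1w heq.symm
      · exact hNu x hxv hxw hadj.symm
    by_cases hxv : x = v
    · subst hxv
      by_cases hyw : y = w
      · subst hyw; rw [hgv, hgw] at heq; exact (h3 heq).1 hadj
      · rw [hgv, hgo y hyu (Ne.symm hne) hyw] at heq
        exact (h4 y hyu (Ne.symm hne) hyw heq.symm).1 hadj
    by_cases hyv : y = v
    · subst hyv
      by_cases hxw : x = w
      · subst hxw; rw [hgw, hgv] at heq; exact (h3 heq.symm).1 hadj.symm
      · rw [hgo x hxu hxv hxw, hgv] at heq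
        exact (h4 x hxu hxv hxw heq).1 hadj.symm
    by_cases hxw : x = w
    · subst hxw
      rw [hgw, hgo y hyu hyv (Ne.symm hne)] at heq
      exact (h5 y hyu hyv (Ne.symm hne) heq.symm).1 hadj
    by_cases hyw : y = w
    · subst hyw
      rw [hgo x hxu hxv hxw, hgw] at heq
      exact (h5 x hxu hxv hxw heq).1 hadj.symm
    · rw [hgo x hxu hxv hxw, hgo y hyu hyv hyw] at heq
      exact A1 x y hxu hyu hne heq hadj
  have good2 : ∀ x y, x ≠ y → g x = g y → (g x = 2 ∨ g x = 3) →
      ∀ z, ¬ (G.Adj x z ∧ G.Adj z y) := by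
    intro x y hne heq hc z ⟨hxz, hzy⟩
    have hzx : G.Adj z x := hxz.symm
    have hyz : G.Adj y z := hzy.symm
    by_cases hxu : x = u
    · subst hxu
      rw [hgu] at heq hc
      rcases ((hN z).mp hxz).imp Eq.symm Eq.symm with hz | hz <;> subst hz
      · -- z = v
        by_cases hyv : y = v
        · exact G.irrefl (hyv ▸ hzy)
        by_cases hyw : y = w
        · subst hyw; rw [hgw] at heq; exact h1w heq
        · rw [hgo y hne.symm hyv hyw] at heq
          exact (h2 hc y hne.symm hyv hyw heq.symm).1 hzy
      · -- z = w
        by_cases hyw : y = w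
        · exact G.irrefl (hyw ▸ hzy)
        by_cases hyv : y = v
        · subst hyv; rw [hgv] at heq; exact h1v heq
        · rw [hgo y hne.symm hyv hyw] at heq
          exact (h2 hc y hne.symm hyv hyw heq.symm).2 hzy
    by_cases hyu : y = u
    · subst hyu
      rw [heq, hgu] at hc
      rcases ((hN z).mp hyz).imp Eq.symm Eq.symm with hz | hz <;> subst hz
      · by_cases hxv : x = v
        · exact G.irrefl (hxv ▸ hxz)
        by_cases hxw : x = w
        · subst hxw; rw [hgw, hgu] at heq; exact h1w heq.symm
        · rw [hgo x hne hxv hxw, hgu] at heq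
          exact (h2 hc x hne hxv hxw heq).1 hzx
      · by_cases hxw : x = w
        · exact G.irrefl (hxw ▸ hxz)
        by_cases hxv : x = v
        · subst hxv; rw [hgv, hgu] at heq; exact h1v heq.symm
        · rw [hgo x hne hxv hxw, hgu] at heq
          exact (h2 hc x hne hxv hxw heq).2 hzx
    -- now x ≠ u, y ≠ u. If z = u then x, y ∈ {v, w}.
    by_cases hzu : z = u
    · subst hzu
      rcases (hN x).mp hzx with hx' | hx' <;> subst hx' <;>
        rcases (hN y).mp hzy with hy' | hy' <;> subst hy'
      · exact hne rfl
      · rw [hgv, hgw] at heq; rw [hgv] at hc; exact (h3 heq).2 hc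
      · rw [hgw, hgv] at heq; rw [hgw] at hc; exact (h3 heq.symm).2 (heq ▸ hc)
      · exact hne rfl
    by_cases hxv : x = v
    · subst hxv
      rw [hgv] at heq hc
      by_cases hyw : y = w
      · subst hyw; rw [hgw] at heq; exact (h3 heq).2 hc
      · rw [hgo y hyu (Ne.symm hne) hyw] at heq
        exact (h4 y hyu (Ne.symm hne) hyw heq.symm).2 hc z hzu ⟨hxz, hzy⟩
    by_cases hyv : y = v
    · subst hyv
      rw [hgv] at heq
      by_cases hxw : x = w
      · subst hxw; rw [hgw] at heq hc; exact (h3 heq.symm).2 (heq ▸ hc)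
      · rw [hgo x hxu hxv hxw] at heq hc
        exact (h4 x hxu hxv hxw heq).2 (heq.symm ▸ hc) z hzu ⟨hzy.symm, hzx⟩
    by_cases hxw : x = w
    · subst hxw
      rw [hgw] at heq hc
      rw [hgo y hyu hyv (Ne.symm hne)] at heq
      exact (h5 y hyu hyv (Ne.symm hne) heq.symm).2 hc z hzu ⟨hxz, hzy⟩
    by_cases hyw : y = w
    · subst hyw
      rw [hgw] at heq
      rw [hgo x hxu hxv hxw] at heq hc
      exact (h5 x hxu hxv hxw heq).2 (heq.symm ▸ hc) z hzu ⟨hyz, hzx⟩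
    · rw [hgo x hxu hxv hxw] at heq hc
      rw [hgo y hyu hyv hyw] at heq
      exact A2 x y hxu hyu hne heq hc z hzu ⟨hxz, hzy⟩
  refine ⟨g, ?_⟩
  intro i x y hx hy hne
  have heq : g x = g y := by rw [hx, hy]
  fin_cases i
  · have := two_le_edist' G hne (good1 x y hne heq)
    simpa [one_add_one_eq_two] using this
  · have := two_le_edist' G hne (good1 x y hne heq)
    simpa [one_add_one_eq_two] using this
  · have := three_le_edist' G hne (good1 x y hne heq)
      (good2 x y hne heq (Or.inl hx))
    simpa [two_add_one_eq_three] using this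
  · have := three_le_edist' G hne (good1 x y hne heq)
      (good2 x y hne heq (Or.inr hx))
    simpa [two_add_one_eq_three] using this

section Branches
set_option linter.unusedSectionVars false

variable {V : Type*} [DecidableEq V] (G : SimpleGraph V) {u v w : V}

/-- keep a vertex's color: h4/h5-type condition follows from A1/A2 -/
lemma keep_cond
    (f' : V → Fin 4)
    (A1 : ∀ x y, x ≠ u → y ≠ u → x ≠ y → f' x = f' y → ¬ G.Adj x y)
    (A2 : ∀ x y, x ≠ u → y ≠ u → x ≠ y → f' x = f' y → (f' x = 2 ∨ f' x = 3) →
          ∀ z, z ≠ u → ¬ (G.Adj x z ∧ G.Adj z y))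
    (t : V) (htu : t ≠ u) (htv : t = v ∨ t = w) :
    ∀ x, x ≠ u → x ≠ v → x ≠ w → f' x = f' t →
      ¬ G.Adj t x ∧ ((f' t = 2 ∨ f' t = 3) → ∀ z, z ≠ u → ¬ (G.Adj t z ∧ G.Adj z x)) := by
  intro x hxu hxv hxw hfx
  have htx : t ≠ x := by
    rcases htv with rfl | rfl
    exacts [Ne.symm hxv, Ne.symm hxw]
  exact ⟨A1 t x htu hxu htx hfx.symm, fun hc => A2 t x htu hxu htx hfx.symm hc⟩

/-- Branch: no recoloring, u gets a color in {0,1} unused by v, w. -/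
lemma branch_easy (huv : u ≠ v) (huw : u ≠ w) (hvw : v ≠ w)
    (hN : ∀ z, G.Adj u z ↔ (z = v ∨ z = w))
    (f' : V → Fin 4)
    (A1 : ∀ x y, x ≠ u → y ≠ u → x ≠ y → f' x = f' y → ¬ G.Adj x y)
    (A2 : ∀ x y, x ≠ u → y ≠ u → x ≠ y → f' x = f' y → (f' x = 2 ∨ f' x = 3) →
          ∀ z, z ≠ u → ¬ (G.Adj x z ∧ G.Adj z y))
    (cu : Fin 4) (hcu : cu = 0 ∨ cu = 1)
    (hv : cu ≠ f' v) (hw : cu ≠ f' w)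
    (hsame : f' v = f' w → ¬ (f' v = 2 ∨ f' v = 3)) :
    ∃ g : V → Fin 4, IsPackingColoring G ![1, 1, 2, 2] g := by
  apply master G huv huw hvw hN f' A1 A2 cu (f' v) (f' w) hv hw
  · intro h; rcases hcu with rfl | rfl <;> simp_all
  · intro h
    exact ⟨A1 v w (Ne.symm huv) (Ne.symm huw) hvw h, hsame h⟩
  · exact keep_cond G f' A1 A2 v (Ne.symm huv) (Or.inl rfl)
  · exact keep_cond G f' A1 A2 w (Ne.symm huw) (Or.inr rfl)

/-- Branch: no recoloring, u gets a free color in {2,3}. -/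
lemma branch_free (huv : u ≠ v) (huw : u ≠ w) (hvw : v ≠ w)
    (hN : ∀ z, G.Adj u z ↔ (z = v ∨ z = w))
    (f' : V → Fin 4)
    (A1 : ∀ x y, x ≠ u → y ≠ u → x ≠ y → f' x = f' y → ¬ G.Adj x y)
    (A2 : ∀ x y, x ≠ u → y ≠ u → x ≠ y → f' x = f' y → (f' x = 2 ∨ f' x = 3) →
          ∀ z, z ≠ u → ¬ (G.Adj x z ∧ G.Adj z y))
    (cu : Fin 4)
    (hv : cu ≠ f' v) (hw : cu ≠ f' w) (hvw' : f' v ≠ f' w)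
    (hfree : ∀ x, x ≠ u → x ≠ v → x ≠ w → f' x = cu → ¬ G.Adj v x ∧ ¬ G.Adj w x) :
    ∃ g : V → Fin 4, IsPackingColoring G ![1, 1, 2, 2] g := by
  apply master G huv huw hvw hN f' A1 A2 cu (f' v) (f' w) hv hw
  · intro _; exact hfree
  · intro h; exact absurd h hvw'
  · exact keep_cond G f' A1 A2 v (Ne.symm huv) (Or.inl rfl)
  · exact keep_cond G f' A1 A2 w (Ne.symm huw) (Or.inr rfl)

/-- Branch: recolor v to β ∈ {0,1}, u gets cu ∈ {0,1}. -/
lemma branch_recolor_v {v' : V} (huv : u ≠ v) (huw : u ≠ w) (hvw : v ≠ w)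
    (hN : ∀ z, G.Adj u z ↔ (z = v ∨ z = w))
    (hNv : ∀ z, G.Adj v z ↔ (z = u ∨ z = v'))
    (f' : V → Fin 4)
    (A1 : ∀ x y, x ≠ u → y ≠ u → x ≠ y → f' x = f' y → ¬ G.Adj x y)
    (A2 : ∀ x y, x ≠ u → y ≠ u → x ≠ y → f' x = f' y → (f' x = 2 ∨ f' x = 3) →
          ∀ z, z ≠ u → ¬ (G.Adj x z ∧ G.Adj z y))
    (β cu : Fin 4) (hβ : β = 0 ∨ β = 1) (hcu : cu = 0 ∨ cu = 1) (hβcu : β ≠ cu)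
    (hwcu : f' w ≠ cu) (hv' : f' v' ≠ β) :
    ∃ g : V → Fin 4, IsPackingColoring G ![1, 1, 2, 2] g := by
  apply master G huv huw hvw hN f' A1 A2 cu β (f' w) (Ne.symm hβcu) (Ne.symm hwcu)
  · intro h; rcases hcu with rfl | rfl <;> simp_all
  · intro h
    constructor
    · intro hadj
      rcases (hNv w).mp hadj with h' | h'
      · exact huw h'.symm
      · exact hv' (h' ▸ h.symm ▸ rfl)
    · rcases hβ with rfl | rfl <;> simp
  · intro x hxu hxv hxw hfx
    constructor
    · intro hadj
      rcases (hNv x).mp hadj with h' | h'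
      · exact hxu h'
      · exact hv' (h' ▸ hfx)
    · rcases hβ with rfl | rfl <;> simp
  · exact keep_cond G f' A1 A2 w (Ne.symm huw) (Or.inr rfl)

/-- Branch: recolor w to γ ∈ {0,1}, u gets cu ∈ {0,1}. -/
lemma branch_recolor_w (huv : u ≠ v) (huw : u ≠ w) (hvw : v ≠ w)
    (hN : ∀ z, G.Adj u z ↔ (z = v ∨ z = w))
    (f' : V → Fin 4)
    (A1 : ∀ x y, x ≠ u → y ≠ u → x ≠ y → f' x = f' y → ¬ G.Adj x y)
    (A2 : ∀ x y, x ≠ u → y ≠ u → x ≠ y → f' x = f' y → (f' x = 2 ∨ f' x = 3) →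
          ∀ z, z ≠ u → ¬ (G.Adj x z ∧ G.Adj z y))
    (γ cu : Fin 4) (hγ : γ = 0 ∨ γ = 1) (hcu : cu = 0 ∨ cu = 1) (hγcu : γ ≠ cu)
    (hvcu : f' v ≠ cu)
    (hWnbr : ∀ x, G.Adj w x → x = u ∨ f' x ≠ γ)
    (hvwadj : f' v = γ → ¬ G.Adj v w) :
    ∃ g : V → Fin 4, IsPackingColoring G ![1, 1, 2, 2] g := by
  apply master G huv huw hvw hN f' A1 A2 cu (f' v) γ (Ne.symm hvcu) (Ne.symm hγcu)
  · intro h; rcases hcu with rfl | rfl <;> simp_all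
  · intro h
    refine ⟨hvwadj h, ?_⟩
    rcases hγ with rfl | rfl <;> rw [h] <;> simp
  · exact keep_cond G f' A1 A2 v (Ne.symm huv) (Or.inl rfl)
  · intro x hxu hxv hxw hfx
    constructor
    · intro hadj
      rcases hWnbr x hadj with h' | h'
      · exact hxu h'
      · exact h' hfx
    · rcases hγ with rfl | rfl <;> simp

end Branches

/-- The hard branch: f' v and f' w are 0,1 in some order. -/
lemma branch_hard {V : Type*} [Fintype V] [DecidableEq V] (G : SimpleGraph V)
    [DecidableRel G.Adj] {u v w v' : V}
    (hdeg : ∀ x, G.degree x ≤ 3)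
    (huv : u ≠ v) (huw : u ≠ w) (hvw : v ≠ w)
    (hN : ∀ z, G.Adj u z ↔ (z = v ∨ z = w))
    (hNv : ∀ z, G.Adj v z ↔ (z = u ∨ z = v'))
    (hAdjuw : G.Adj u w)
    (f' : V → Fin 4)
    (A1 : ∀ x y, x ≠ u → y ≠ u → x ≠ y → f' x = f' y → ¬ G.Adj x y)
    (A2 : ∀ x y, x ≠ u → y ≠ u → x ≠ y → f' x = f' y → (f' x = 2 ∨ f' x = 3) →
          ∀ z, z ≠ u → ¬ (G.Adj x z ∧ G.Adj z y))
    (a b : Fin 4) (hab : (a = 0 ∧ b = 1) ∨ (a = 1 ∧ b = 0))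
    (hfv : f' v = a) (hfw : f' w = b) :
    ∃ g : V → Fin 4, IsPackingColoring G ![1, 1, 2, 2] g := by
  have ha01 : a = 0 ∨ a = 1 := by rcases hab with ⟨rfl, rfl⟩ | ⟨rfl, rfl⟩ <;> simp
  have hb01 : b = 0 ∨ b = 1 := by rcases hab with ⟨rfl, rfl⟩ | ⟨rfl, rfl⟩ <;> simp
  have hanb : a ≠ b := by rcases hab with ⟨rfl, rfl⟩ | ⟨rfl, rfl⟩ <;> decide
  have ha2 : a ≠ 2 := by rcases ha01 with rfl | rfl <;> decide
  have ha3 : a ≠ 3 := by rcases ha01 with rfl | rfl <;> decide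
  have hb2 : b ≠ 2 := by rcases hb01 with rfl | rfl <;> decide
  have hb3 : b ≠ 3 := by rcases hb01 with rfl | rfl <;> decide
  by_cases hfree2 : ∀ x, x ≠ u → x ≠ v → x ≠ w → f' x = 2 → ¬ G.Adj v x ∧ ¬ G.Adj w x
  · exact branch_free G huv huw hvw hN f' A1 A2 2
      (by rw [hfv]; exact Ne.symm ha2) (by rw [hfw]; exact Ne.symm hb2)
      (by rw [hfv, hfw]; exact hanb) hfree2
  by_cases hfree3 : ∀ x, x ≠ u → x ≠ v → x ≠ w → f' x = 3 → ¬ G.Adj v x ∧ ¬ G.Adj w x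
  · exact branch_free G huv huw hvw hN f' A1 A2 3
      (by rw [hfv]; exact Ne.symm ha3) (by rw [hfw]; exact Ne.symm hb3)
      (by rw [hfv, hfw]; exact hanb) hfree3
  push_neg at hfree2 hfree3
  obtain ⟨p, hpu, hpv, hpw, hfp, hp⟩ := hfree2
  obtain ⟨q, hqu, hqv, hqw, hfq, hq⟩ := hfree3
  have hpq : p ≠ q := by
    intro h; rw [h, hfq] at hfp; exact (by decide : (3 : Fin 4) ≠ 2) hfp
  by_cases hv'b : f' v' = b
  · -- recolor w
    have hwp : G.Adj w p := by
      rcases or_iff_not_imp_left.mpr hp with h | h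
      · exfalso
        rcases (hNv p).mp h with h' | h'
        · exact hpu h'
        · rw [h'] at hfp; rw [hfp] at hv'b; exact hb2 hv'b.symm
      · exact h
    have hwq : G.Adj w q := by
      rcases or_iff_not_imp_left.mpr hq with h | h
      · exfalso
        rcases (hNv q).mp h with h' | h'
        · exact hqu h'
        · rw [h'] at hfq; rw [hfq] at hv'b; exact hb3 hv'b.symm
      · exact h
    have hupq : u ≠ p ∧ u ≠ q ∧ v ≠ p ∧ v ≠ q :=
      ⟨Ne.symm hpu, Ne.symm hqu, Ne.symm hpv, Ne.symm hqv⟩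
    have hnadjvw : ¬ G.Adj v w := by
      intro hadj
      have hsub : ({u, v, p, q} : Finset V) ⊆ G.neighborFinset w := by
        intro z hz
        rw [SimpleGraph.mem_neighborFinset]
        simp only [Finset.mem_insert, Finset.mem_singleton] at hz
        rcases hz with rfl | rfl | rfl | rfl
        exacts [hAdjuw.symm, hadj.symm, hwp, hwq]
      have hcard : ({u, v, p, q} : Finset V).card = 4 := by
        rw [Finset.card_insert_of_notMem (by simp [huv, hupq.1, hupq.2.1]),
          Finset.card_insert_of_notMem (by simp [hupq.2.2.1, hupq.2.2.2]),
          Finset.card_insert_of_notMem (by simp [hpq]), Finset.card_singleton]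
      have h4 : 4 ≤ G.degree w := hcard ▸ Finset.card_le_card hsub
      have := hdeg w
      omega
    have hWnbr : ∀ x, G.Adj w x → x = u ∨ f' x ≠ a := by
      intro x hx
      by_contra hcon
      push_neg at hcon
      obtain ⟨hxu, hxa⟩ := hcon
      have hxp : x ≠ p := by intro h; rw [h, hfp] at hxa; exact ha2 hxa.symm
      have hxq : x ≠ q := by intro h; rw [h, hfq] at hxa; exact ha3 hxa.symm
      have hxv : x ≠ v := by
        intro h; rw [h] at hx; exact hnadjvw hx.symm
      have hsub : ({u, x, p, q} : Finset V) ⊆ G.neighborFinset w := by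
        intro z hz
        rw [SimpleGraph.mem_neighborFinset]
        simp only [Finset.mem_insert, Finset.mem_singleton] at hz
        rcases hz with rfl | rfl | rfl | rfl
        exacts [hAdjuw.symm, hx, hwp, hwq]
      have hcard : ({u, x, p, q} : Finset V).card = 4 := by
        rw [Finset.card_insert_of_notMem
            (by simp [Ne.symm hxu, hupq.1, hupq.2.1]),
          Finset.card_insert_of_notMem (by simp [hxp, hxq]),
          Finset.card_insert_of_notMem (by simp [hpq]), Finset.card_singleton]
      have h4 : 4 ≤ G.degree w := hcard ▸ Finset.card_le_card hsub
      have := hdeg w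
      omega
    exact branch_recolor_w G huv huw hvw hN f' A1 A2 a b ha01 hb01 hanb
      (by rw [hfv]; exact hanb) hWnbr (fun _ => hnadjvw)
  · -- recolor v
    exact branch_recolor_v G huv huw hvw hN hNv f' A1 A2 b a hb01 ha01 (Ne.symm hanb)
      (by rw [hfw]; exact Ne.symm hanb) hv'b


/-- A vertex-minimal subcubic graph with no packing `(1,1,2,2)`-coloring has no two
adjacent vertices of degree `2`. -/
theorem stmt6 {V : Type*} [Fintype V] [DecidableEq V] (G : SimpleGraph V)
    [DecidableRel G.Adj] (hdeg : ∀ v, G.degree v ≤ 3)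
    (hmin : ∀ s : Set V, s ≠ Set.univ →
      ∃ f : s → Fin 4, IsPackingColoring (G.induce s) ![1, 1, 2, 2] f)
    (hnot : ¬ ∃ f : V → Fin 4, IsPackingColoring G ![1, 1, 2, 2] f) :
    ∀ u v : V, G.Adj u v → ¬ (G.degree u = 2 ∧ G.degree v = 2) := by
  intro u v huvAdj ⟨hdu, hdv⟩
  apply hnot
  -- extract the second neighbor w of u
  have hvmem : v ∈ G.neighborFinset u := (G.mem_neighborFinset u v).mpr huvAdj
  obtain ⟨a, b, hab, hNab⟩ := Finset.card_eq_two.mp hdu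
  have hvab : v = a ∨ v = b := by
    have := hNab ▸ hvmem; simpa using this
  obtain ⟨w, hvw, hNuw⟩ : ∃ w, v ≠ w ∧ G.neighborFinset u = {v, w} := by
    rcases hvab with rfl | rfl
    · exact ⟨b, hab, hNab⟩
    · exact ⟨a, Ne.symm hab, by rw [hNab]; exact Finset.pair_comm a v⟩
  have hN : ∀ z, G.Adj u z ↔ (z = v ∨ z = w) := by
    intro z
    rw [← G.mem_neighborFinset, hNuw]; simp
  -- extract the second neighbor v' of v
  have humem : u ∈ G.neighborFinset v := (G.mem_neighborFinset v u).mpr huvAdj.symm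
  obtain ⟨a', b', hab', hNab'⟩ := Finset.card_eq_two.mp hdv
  have huab : u = a' ∨ u = b' := by
    have := hNab' ▸ humem; simpa using this
  obtain ⟨v', huv', hNvv'⟩ : ∃ v', u ≠ v' ∧ G.neighborFinset v = {u, v'} := by
    rcases huab with rfl | rfl
    · exact ⟨b', hab', hNab'⟩
    · exact ⟨a', Ne.symm hab', by rw [hNab']; exact Finset.pair_comm a' u⟩
  have hNv : ∀ z, G.Adj v z ↔ (z = u ∨ z = v') := by
    intro z
    rw [← G.mem_neighborFinset, hNvv']; simp
  have huv : u ≠ v := huvAdj.ne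
  have huw : u ≠ w := (G.mem_neighborFinset u w).mp (by rw [hNuw]; simp) |>.ne
  have hAdjuw : G.Adj u w := (hN w).mpr (Or.inr rfl)
  have hAdjvv' : G.Adj v v' := (hNv v').mpr (Or.inr rfl)
  -- get the coloring of G - u
  set s : Set V := {x | x ≠ u} with hs
  obtain ⟨f, hf⟩ := hmin s (by
    intro h
    have : u ∈ s := h ▸ Set.mem_univ u
    exact this rfl)
  obtain ⟨f', hfval⟩ : ∃ f' : V → Fin 4, ∀ x (hx : x ≠ u), f' x = f ⟨x, hx⟩ :=
    ⟨fun x => if h : x = u then 0 else f ⟨x, h⟩, fun x hx => dif_neg hx⟩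
  have hfourth : ∀ c : Fin 4, c = 0 ∨ c = 1 ∨ c = 2 ∨ c = 3 := by decide
  have A1 : ∀ x y, x ≠ u → y ≠ u → x ≠ y → f' x = f' y → ¬ G.Adj x y := by
    intro x y hxu hyu hxy hfeq hadj
    have hadj' : (G.induce s).Adj ⟨x, hxu⟩ ⟨y, hyu⟩ := hadj
    have hfeq' : f ⟨y, hyu⟩ = f ⟨x, hxu⟩ := by
      rw [← hfval x hxu, ← hfval y hyu, hfeq]
    have hne' : (⟨x, hxu⟩ : s) ≠ ⟨y, hyu⟩ := by simpa using hxy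
    have hcol := hf (f ⟨x, hxu⟩) ⟨x, hxu⟩ ⟨y, hyu⟩ rfl hfeq' hne'
    rw [edist_eq_one_iff_adj.mpr hadj'] at hcol
    rcases hfourth (f ⟨x, hxu⟩) with h | h | h | h <;> rw [h] at hcol <;>
      revert hcol <;> decide
  have A2 : ∀ x y, x ≠ u → y ≠ u → x ≠ y → f' x = f' y → (f' x = 2 ∨ f' x = 3) →
      ∀ z, z ≠ u → ¬ (G.Adj x z ∧ G.Adj z y) := by
    intro x y hxu hyu hxy hfeq hc z hzu ⟨hxz, hzy⟩
    have hadj1 : (G.induce s).Adj ⟨x, hxu⟩ ⟨z, hzu⟩ := hxz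
    have hadj2 : (G.induce s).Adj ⟨z, hzu⟩ ⟨y, hyu⟩ := hzy
    have hfeq' : f ⟨y, hyu⟩ = f ⟨x, hxu⟩ := by
      rw [← hfval x hxu, ← hfval y hyu, hfeq]
    have hne' : (⟨x, hxu⟩ : s) ≠ ⟨y, hyu⟩ := by simpa using hxy
    have hcol := hf (f ⟨x, hxu⟩) ⟨x, hxu⟩ ⟨y, hyu⟩ rfl hfeq' hne'
    have hle : (G.induce s).edist ⟨x, hxu⟩ ⟨y, hyu⟩ ≤ 2 := by
      have := SimpleGraph.edist_le
        (SimpleGraph.Walk.cons hadj1 (SimpleGraph.Walk.cons hadj2 SimpleGraph.Walk.nil))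
      simpa using this
    have hcol2 := le_trans hcol hle
    rw [hfval x hxu] at hc
    rcases hc with h | h <;> rw [h] at hcol2 <;>
      revert hcol2 <;> decide
  clear hf hfval
  rcases hfourth (f' v) with hv | hv | hv | hv <;>
    rcases hfourth (f' w) with hw | hw | hw | hw
  -- (0,0)
  · exact branch_easy G huv huw hvw hN f' A1 A2 1 (Or.inr rfl)
      (by rw [hv]; decide) (by rw [hw]; decide) (by intro _; rw [hv]; decide)
  -- (0,1) HARD
  · exact branch_hard G hdeg huv huw hvw hN hNv hAdjuw f' A1 A2 0 1 (Or.inl ⟨rfl, rfl⟩) hv hw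
  -- (0,2)
  · exact branch_easy G huv huw hvw hN f' A1 A2 1 (Or.inr rfl)
      (by rw [hv]; decide) (by rw [hw]; decide) (by rw [hv, hw]; decide)
  -- (0,3)
  · exact branch_easy G huv huw hvw hN f' A1 A2 1 (Or.inr rfl)
      (by rw [hv]; decide) (by rw [hw]; decide) (by rw [hv, hw]; decide)
  -- (1,0) HARD
  · exact branch_hard G hdeg huv huw hvw hN hNv hAdjuw f' A1 A2 1 0 (Or.inr ⟨rfl, rfl⟩) hv hw
  -- (1,1)
  · exact branch_easy G huv huw hvw hN f' A1 A2 0 (Or.inl rfl)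
      (by rw [hv]; decide) (by rw [hw]; decide) (by intro _; rw [hv]; decide)
  -- (1,2)
  · exact branch_easy G huv huw hvw hN f' A1 A2 0 (Or.inl rfl)
      (by rw [hv]; decide) (by rw [hw]; decide) (by rw [hv, hw]; decide)
  -- (1,3)
  · exact branch_easy G huv huw hvw hN f' A1 A2 0 (Or.inl rfl)
      (by rw [hv]; decide) (by rw [hw]; decide) (by rw [hv, hw]; decide)
  -- (2,0)
  · exact branch_easy G huv huw hvw hN f' A1 A2 1 (Or.inr rfl)
      (by rw [hv]; decide) (by rw [hw]; decide) (by rw [hv, hw]; decide)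
  -- (2,1)
  · exact branch_easy G huv huw hvw hN f' A1 A2 0 (Or.inl rfl)
      (by rw [hv]; decide) (by rw [hw]; decide) (by rw [hv, hw]; decide)
  -- (2,2) recolor v
  · by_cases h0 : f' v' = 0
    · exact branch_recolor_v G huv huw hvw hN hNv f' A1 A2 1 0 (Or.inr rfl) (Or.inl rfl)
        (by decide) (by rw [hw]; decide) (by rw [h0]; decide)
    · exact branch_recolor_v G huv huw hvw hN hNv f' A1 A2 0 1 (Or.inl rfl) (Or.inr rfl)
        (by decide) (by rw [hw]; decide) h0
  -- (2,3)
  · exact branch_easy G huv huw hvw hN f' A1 A2 0 (Or.inl rfl)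
      (by rw [hv]; decide) (by rw [hw]; decide) (by rw [hv, hw]; decide)
  -- (3,0)
  · exact branch_easy G huv huw hvw hN f' A1 A2 1 (Or.inr rfl)
      (by rw [hv]; decide) (by rw [hw]; decide) (by rw [hv, hw]; decide)
  -- (3,1)
  · exact branch_easy G huv huw hvw hN f' A1 A2 0 (Or.inl rfl)
      (by rw [hv]; decide) (by rw [hw]; decide) (by rw [hv, hw]; decide)
  -- (3,2)
  · exact branch_easy G huv huw hvw hN f' A1 A2 0 (Or.inl rfl)
      (by rw [hv]; decide) (by rw [hw]; decide) (by rw [hv, hw]; decide)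
  -- (3,3) recolor v
  · by_cases h0 : f' v' = 0
    · exact branch_recolor_v G huv huw hvw hN hNv f' A1 A2 1 0 (Or.inr rfl) (Or.inl rfl)
        (by decide) (by rw [hw]; decide) (by rw [h0]; decide)
    · exact branch_recolor_v G huv huw hvw hN hNv f' A1 A2 0 1 (Or.inl rfl) (Or.inr rfl)
        (by decide) (by rw [hw]; decide) h0
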